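/- Let S = conv{a_1,...,a_{n+1}} be an n-simplex in R^n with faces S^i = conv{a_1,...,a_{i-1},a_{i+1},...,a_{n+1}}. If A^1,...,A^{n+1} are closed convex subsets of S with S^i ⊆ A^i for each i, then there exist a point v ∈ S and ε₀ ≥ 0 such that dist(v, A^i) = ε₀ for every i. -/

import Mathlib

open Metric Finset

lemma infDist_comb {E : Type*} [NormedAddCommGroup E] [NormedSpace ℝ E] {A : Set E}
    (hA : Convex ℝ A) (hne : A.Nonempty) {x y : E} {s t : ℝ} (hs : 0 ≤ s) (ht : 0 ≤ t)
    (hst : s + t = 1) :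
    infDist (s • x + t • y) A ≤ s * infDist x A + t * infDist y A := by
  refine le_of_forall_pos_le_add fun δ hδ => ?_
  obtain ⟨p, hp, hpd⟩ := (infDist_lt_iff hne).1
    (lt_add_of_le_of_pos le_rfl (half_pos hδ) : infDist x A < infDist x A + δ/2)
  obtain ⟨q, hq, hqd⟩ := (infDist_lt_iff hne).1
    (lt_add_of_le_of_pos le_rfl (half_pos hδ) : infDist y A < infDist y A + δ/2)
  have hmem : s • p + t • q ∈ A := hA hp hq hs ht hst
  calc infDist (s • x + t • y) A ≤ dist (s • x + t • y) (s • p + t • q) :=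
        infDist_le_dist_of_mem hmem
    _ ≤ s * dist x p + t * dist y q := by
        rw [dist_eq_norm, dist_eq_norm, dist_eq_norm]
        calc ‖s • x + t • y - (s • p + t • q)‖ = ‖s • (x - p) + t • (y - q)‖ := by
              have h : s • x + t • y - (s • p + t • q) = s • (x - p) + t • (y - q) := by
                module
              rw [h]
          _ ≤ ‖s • (x - p)‖ + ‖t • (y - q)‖ := norm_add_le _ _
          _ = s * ‖x - p‖ + t * ‖y - q‖ := by
              rw [norm_smul, norm_smul, Real.norm_of_nonneg hs, Real.norm_of_nonneg ht]
    _ ≤ s * (infDist x A + δ/2) + t * (infDist y A + δ/2) := by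
        have h1 := mul_le_mul_of_nonneg_left hpd.le hs
        have h2 := mul_le_mul_of_nonneg_left hqd.le ht
        linarith
    _ = s * infDist x A + t * infDist y A + δ/2 * (s + t) := by ring
    _ ≤ s * infDist x A + t * infDist y A + δ := by rw [hst]; linarith

theorem stmt_0 (n : ℕ) (a : Fin (n + 1) → EuclideanSpace ℝ (Fin n))
    (ha : AffineIndependent ℝ a)
    (S : Set (EuclideanSpace ℝ (Fin n))) (hS : S = convexHull ℝ (Set.range a))
    (face : Fin (n + 1) → Set (EuclideanSpace ℝ (Fin n)))
    (hface : ∀ i, face i = convexHull ℝ (a '' {j | j ≠ i}))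
    (A : Fin (n + 1) → Set (EuclideanSpace ℝ (Fin n)))
    (hAclosed : ∀ i, IsClosed (A i)) (hAconv : ∀ i, Convex ℝ (A i))
    (hAS : ∀ i, A i ⊆ S) (hfaceA : ∀ i, face i ⊆ A i) :
    ∃ v ∈ S, ∃ ε₀ : ℝ, 0 ≤ ε₀ ∧ ∀ i, Metric.infDist v (A i) = ε₀ := by
  classical
  set d : Fin (n + 1) → EuclideanSpace ℝ (Fin n) → ℝ := fun i v => infDist v (A i) with hd
  have hScomp : IsCompact S := hS ▸ (Set.finite_range a).isCompact_convexHull ℝ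
  have hSconv : Convex ℝ S := hS ▸ convex_convexHull ℝ _
  have hSne : S.Nonempty := by
    rw [hS]
    exact (convexHull_nonempty_iff).2 (Set.range_nonempty a)
  have hune : (Finset.univ : Finset (Fin (n + 1))).Nonempty := univ_nonempty
  set g : EuclideanSpace ℝ (Fin n) → ℝ := fun v => univ.sup' hune (fun i => d i v) with hg
  have hgcont : Continuous g :=
    Continuous.finset_sup'_apply hune fun i _ => continuous_infDist_pt (A i)
  obtain ⟨v₀, hv₀S, hv₀min⟩ := hScomp.exists_isMinOn hSne hgcont.continuousOn
  set ε₀ : ℝ := g v₀ with hε₀def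
  have hdle : ∀ i, d i v₀ ≤ ε₀ := fun i => Finset.le_sup' (fun j => d j v₀) (mem_univ i)
  have hdnn : ∀ i (v : EuclideanSpace ℝ (Fin n)), 0 ≤ d i v := fun i v => infDist_nonneg
  by_cases hex : ∃ i₀, d i₀ v₀ < ε₀
  · exfalso
    obtain ⟨i₀, hi₀⟩ := hex
    have hε₀pos : 0 < ε₀ := lt_of_le_of_lt (hdnn i₀ v₀) hi₀
    -- a i₀ belongs to A i for i ≠ i₀
    have hmem : ∀ i, i ≠ i₀ → a i₀ ∈ A i := fun i hi =>
      hfaceA i (by rw [hface i]; exact subset_convexHull ℝ _ ⟨i₀, fun h => hi h.symm, rfl⟩)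
    set δ : ℝ := ε₀ - d i₀ v₀ with hδdef
    have hδpos : 0 < δ := sub_pos.2 hi₀
    set c : ℝ := d i₀ (a i₀) with hc
    have hcnn : 0 ≤ c := hdnn _ _
    set B : ℝ := c + ε₀ + δ + 1 with hB
    have hBpos : 0 < B := by positivity
    set t : ℝ := min (1/2) (δ / (2 * B)) with ht
    have htpos : 0 < t := lt_min (by norm_num) (by positivity)
    have htle : t ≤ 1/2 := min_le_left _ _
    have ht1 : 0 ≤ 1 - t := by linarith
    have hst : (1 - t) + t = 1 := by ring
    set v' : EuclideanSpace ℝ (Fin n) := (1 - t) • v₀ + t • a i₀ with hv'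
    have hv'S : v' ∈ S := hSconv hv₀S (by
      rw [hS]; exact subset_convexHull ℝ _ ⟨i₀, rfl⟩) ht1 htpos.le hst
    have haS : a i₀ ∈ S := by rw [hS]; exact subset_convexHull ℝ _ ⟨i₀, rfl⟩
    have hlt : ∀ i, d i v' < ε₀ := by
      intro i
      by_cases hii : i = i₀
      · subst hii
        by_cases hne : (A i).Nonempty
        · have h1 : d i v' ≤ (1 - t) * d i v₀ + t * c :=
            infDist_comb (hAconv i) hne ht1 htpos.le hst
          have h2 : t * B ≤ δ / 2 := by
            have : t ≤ δ / (2 * B) := min_le_right _ _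
            calc t * B ≤ δ / (2 * B) * B := by gcongr
              _ = δ / 2 := by field_simp
          have h3 : t * (c - d i v₀) ≤ δ / 2 := by
            rcases le_or_gt (c - d i v₀) 0 with h | h
            · nlinarith
            · calc t * (c - d i v₀) ≤ t * B := by
                    have := hdnn i v₀; gcongr; simp only [hB]; linarith [hdle i]
                _ ≤ δ / 2 := h2
          calc d i v' ≤ (1 - t) * d i v₀ + t * c := h1
            _ = d i v₀ + t * (c - d i v₀) := by ring
            _ ≤ d i v₀ + δ / 2 := by linarith
            _ < ε₀ := by simp only [hδdef] at *; linarith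
        · rw [Set.not_nonempty_iff_eq_empty] at hne
          simpa [hd, hne, infDist_empty] using hε₀pos
      · have hAne : (A i).Nonempty := ⟨a i₀, hmem i hii⟩
        have h1 : d i v' ≤ (1 - t) * d i v₀ + t * d i (a i₀) :=
          infDist_comb (hAconv i) hAne ht1 htpos.le hst
        have h0 : d i (a i₀) = 0 := infDist_zero_of_mem (hmem i hii)
        calc d i v' ≤ (1 - t) * d i v₀ + t * d i (a i₀) := h1
          _ = (1 - t) * d i v₀ := by rw [h0]; ring
          _ ≤ (1 - t) * ε₀ := by gcongr; exact hdle i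
          _ < ε₀ := by nlinarith
    have : g v' < ε₀ := (Finset.sup'_lt_iff hune).2 fun i _ => hlt i
    exact absurd (hv₀min hv'S) (not_le.2 this)
  · push_neg at hex
    refine ⟨v₀, hv₀S, ε₀, le_trans (hdnn 0 v₀) (hdle 0), fun i => le_antisymm (hdle i) (hex i)⟩
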